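/- Let (T,𝐁) be a minimal tree decomposition of the incidence graph of a CNF F (no element can be removed from any bag without violating the decomposition properties). Let t' be a node with two children t₁, t₂ rooting subtrees T₁, T₂, and let C be a clause contained in both a bag of T₁ and a bag of T₂ (i.e., C ∈ Cl(t₁) ∩ Cl(t₂)). Then C contains an occurrence of some variable in Var(T₁) \ Var(t') and an occurrence of some variable in Var(T₂) \ Var(t'). -/

import Mathlib

variable {C V : Type}

/-- `Desc n parent t i`: node `i` belongs to the subtree rooted at `t` of the
rooted tree given by the parent function. -/
def Desc (n : ℕ) (parent : Fin n → Fin n) (t i : Fin n) : Prop :=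
  ∃ k : ℕ, parent^[k] i = t

/-- `Bag` is a tree decomposition of the incidence graph of a CNF whose
clause–variable incidences are given by `occ`, over the rooted tree with `n`
nodes given by `parent`: every clause and every variable appears in some bag,
every incidence is witnessed in a common bag, and for each element the set of
nodes containing it is connected (it has a top node `m`, and is closed under
taking parents below `m`). -/
def IsTD (n : ℕ) (parent : Fin n → Fin n) (occ : C → V → Prop)
    (Bag : Fin n → Finset (C ⊕ V)) : Prop :=
  (∀ c : C, ∃ i, Sum.inl c ∈ Bag i) ∧
  (∀ v : V, ∃ i, Sum.inr v ∈ Bag i) ∧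
  (∀ (c : C) (v : V), occ c v → ∃ i, Sum.inl c ∈ Bag i ∧ Sum.inr v ∈ Bag i) ∧
  (∀ x : C ⊕ V, (∀ i, x ∉ Bag i) ∨
    ∃ m, x ∈ Bag m ∧ ∀ i, x ∈ Bag i → i = m ∨ x ∈ Bag (parent i))

lemma desc_refl (n : ℕ) (parent : Fin n → Fin n) (t : Fin n) : Desc n parent t t :=
  ⟨0, rfl⟩

lemma desc_step {n : ℕ} {parent : Fin n → Fin n} {t s i : Fin n}
    (hs : Desc n parent t s) (hi : parent i = s) : Desc n parent t i := by
  obtain ⟨k, hk⟩ := hs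
  exact ⟨k + 1, by rw [Function.iterate_succ_apply, hi, hk]⟩

lemma reaches_zero {n : ℕ} (hn : 0 < n) {parent : Fin n → Fin n}
    (hpar : ∀ i : Fin n, (parent i : ℕ) < (i : ℕ) ∨ (i : ℕ) = 0) (i : Fin n) :
    ∃ k, parent^[k] i = ⟨0, hn⟩ := by
  suffices h : ∀ (N : ℕ) (i : Fin n), (i : ℕ) ≤ N → ∃ k, parent^[k] i = ⟨0, hn⟩ from
    h i i le_rfl
  intro N
  induction N with
  | zero =>
    intro i hi
    exact ⟨0, Fin.ext (by simpa using hi)⟩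
  | succ N ih =>
    intro i hi
    rcases hpar i with h | h
    · obtain ⟨k, hk⟩ := ih (parent i) (by omega)
      exact ⟨k + 1, by rw [Function.iterate_succ_apply, hk]⟩
    · exact ⟨0, Fin.ext h⟩

lemma desc_ge {n : ℕ} (hn : 0 < n) {parent : Fin n → Fin n}
    (hpar : ∀ i : Fin n, (parent i : ℕ) < (i : ℕ) ∨ (i : ℕ) = 0) {t₁ : Fin n}
    (h0 : ¬ Desc n parent t₁ ⟨0, hn⟩) :
    ∀ (k : ℕ) (i : Fin n), parent^[k] i = t₁ → (t₁ : ℕ) ≤ (i : ℕ) := by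
  intro k
  induction k with
  | zero =>
    intro i hi
    simp only [Function.iterate_zero_apply] at hi
    exact le_of_eq (by rw [hi])
  | succ k ih =>
    intro i hi
    have hi' : parent^[k] (parent i) = t₁ := by
      rwa [Function.iterate_succ_apply] at hi
    have h1 := ih (parent i) hi'
    rcases hpar i with h | h
    · omega
    · exfalso
      have : i = (⟨0, hn⟩ : Fin n) := Fin.ext h
      exact h0 ⟨k + 1, by rw [← this]; exact hi⟩

/-- Key combinatorial lemma: in a connected node set `S` (with top `m`) containing
`t'` and its child `t₁`, there is a node `s` in the subtree of `t₁`, different from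
`t'`, whose removal keeps `S` connected (with new top `m'`). -/
lemma key_lemma (n : ℕ) (hn : 0 < n) (parent : Fin n → Fin n)
    (hpar : ∀ i : Fin n, (parent i : ℕ) < (i : ℕ) ∨ (i : ℕ) = 0)
    (S : Finset (Fin n)) (m : Fin n) (hm : m ∈ S)
    (htop : ∀ i ∈ S, i = m ∨ parent i ∈ S)
    (t' t₁ : Fin n) (ht' : t' ∈ S) (ht₁ : t₁ ∈ S)
    (hp : parent t₁ = t') (hne : t₁ ≠ t') :
    ∃ s ∈ S, Desc n parent t₁ s ∧ s ≠ t' ∧ ∃ m' ∈ S, m' ≠ s ∧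
      ∀ i ∈ S, i ≠ s → i = m' ∨ (parent i ∈ S ∧ parent i ≠ s) := by
  classical
  by_cases hd0 : Desc n parent t₁ ⟨0, hn⟩
  · -- Case I : node 0 is in the subtree of t₁, hence every node is.
    have hall : ∀ i : Fin n, Desc n parent t₁ i := by
      intro i
      obtain ⟨k, hk⟩ := reaches_zero hn hpar i
      obtain ⟨j, hj⟩ := hd0
      exact ⟨j + k, by rw [Function.iterate_add_apply, hk, hj]⟩
    by_cases h1 : ∃ s ∈ S, s ≠ t' ∧ ∀ i ∈ S, i ≠ s → parent i = s → i = m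
    · obtain ⟨s, hsS, hst, hch⟩ := h1
      refine ⟨s, hsS, hall s, hst, ?_⟩
      by_cases hsm : s = m
      · refine ⟨t', ht', Ne.symm hst, ?_⟩
        intro i hiS his
        right
        have him : i ≠ m := fun h => his (h.trans hsm.symm)
        refine ⟨(htop i hiS).resolve_left him, ?_⟩
        intro hps
        exact him (hch i hiS his hps)
      · refine ⟨m, hm, fun h => hsm h.symm, ?_⟩
        intro i hiS his
        by_cases him : i = m
        · exact Or.inl him
        · exact Or.inr ⟨(htop i hiS).resolve_left him, fun hps => him (hch i hiS his hps)⟩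
    by_cases h2 : t₁ = m ∧ ∀ i ∈ S, i ≠ m → parent i = m →
        ∀ j ∈ S, j ≠ m → parent j = m → j = i
    · -- s = m = t₁, with at most one child in S
      obtain ⟨ht₁m, huniq⟩ := h2
      have hmt' : m ≠ t' := ht₁m ▸ hne
      refine ⟨m, hm, ht₁m ▸ hall t₁, hmt', ?_⟩
      by_cases hch : ∃ e ∈ S, e ≠ m ∧ parent e = m
      · obtain ⟨e, heS, hem, hpe⟩ := hch
        refine ⟨e, heS, hem, ?_⟩
        intro i hiS him
        by_cases hie : i = e
        · exact Or.inl hie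
        · refine Or.inr ⟨(htop i hiS).resolve_left him, ?_⟩
          intro hpi
          exact hie ((huniq i hiS him hpi e heS hem hpe).symm)
      · push_neg at hch
        refine ⟨t', ht', Ne.symm hmt', ?_⟩
        intro i hiS him
        exact Or.inr ⟨(htop i hiS).resolve_left him, fun hpi => (hch i hiS him) hpi⟩
    · -- contradiction case
      exfalso
      push_neg at h1
      set T : Finset (Fin n) := S.erase t' with hT
      set M : Finset (Fin n) := S.erase m with hM
      have hw : ∀ s ∈ T, ∃ i ∈ S, i ≠ s ∧ parent i = s ∧ i ≠ m := by
        intro s hs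
        exact h1 s (Finset.mem_of_mem_erase hs) (Finset.ne_of_mem_erase hs)
      set f : ∀ s ∈ T, Fin n := fun s hs => (hw s hs).choose with hf
      have hfspec : ∀ (s : Fin n) (hs : s ∈ T),
          f s hs ∈ S ∧ f s hs ≠ s ∧ parent (f s hs) = s ∧ f s hs ≠ m :=
        fun s hs => by
          obtain ⟨h1', h2', h3', h4'⟩ := (hw s hs).choose_spec
          exact ⟨h1', h2', h3', h4'⟩
      have hfM : ∀ (s : Fin n) (hs : s ∈ T), f s hs ∈ M :=
        fun s hs => Finset.mem_erase.mpr ⟨(hfspec s hs).2.2.2, (hfspec s hs).1⟩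
      have hfinj : ∀ (s₁ s₂ : Fin n) (h₁ : s₁ ∈ T) (h₂ : s₂ ∈ T),
          f s₁ h₁ = f s₂ h₂ → s₁ = s₂ := by
        intro s₁ s₂ h₁ h₂ heq
        have e1 := (hfspec s₁ h₁).2.2.1
        have e2 := (hfspec s₂ h₂).2.2.1
        rw [← e1, ← e2, heq]
      have hcard : M.card ≤ T.card := by
        rw [hT, hM, Finset.card_erase_of_mem hm, Finset.card_erase_of_mem ht']
      have hsurj := Finset.surj_on_of_inj_on_of_card_le f hfM hfinj hcard
      -- every element of M has its parent in T, and parent is injective on M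
      have hrep : ∀ b ∈ M, ∃ (a : Fin n) (ha : a ∈ T), b = f a ha ∧ parent b = a := by
        intro b hb
        obtain ⟨a, ha, hba⟩ := hsurj b hb
        refine ⟨a, ha, hba, ?_⟩
        rw [hba]
        exact (hfspec a ha).2.2.1
      by_cases ht₁m : t₁ = m
      · have hnu : ¬ ∀ i ∈ S, i ≠ m → parent i = m →
            ∀ j ∈ S, j ≠ m → parent j = m → j = i := fun hu => h2 ⟨ht₁m, hu⟩
        push_neg at hnu
        obtain ⟨i, hiS, him, hpi, j, hjS, hjm, hpj, hji⟩ := hnu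
        have hiM : i ∈ M := Finset.mem_erase.mpr ⟨him, hiS⟩
        have hjM : j ∈ M := Finset.mem_erase.mpr ⟨hjm, hjS⟩
        obtain ⟨a, ha, hia, hpa⟩ := hrep i hiM
        obtain ⟨a', ha', hja', hpa'⟩ := hrep j hjM
        have haa : a = a' := by rw [← hpa, ← hpa', hpi, hpj]
        subst haa
        exact hji (by rw [hia, hja'])
      · have ht₁M : t₁ ∈ M := Finset.mem_erase.mpr ⟨ht₁m, ht₁⟩
        obtain ⟨a, ha, -, hpa⟩ := hrep t₁ ht₁M
        rw [hp] at hpa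
        subst hpa
        exact Finset.ne_of_mem_erase ha rfl
  · -- Case II : the subtree of t₁ does not contain node 0
    have hge := desc_ge hn hpar hd0
    set A : Finset (Fin n) := S.filter (fun i => Desc n parent t₁ i) with hA
    have hAne : A.Nonempty := ⟨t₁, Finset.mem_filter.mpr ⟨ht₁, desc_refl n parent t₁⟩⟩
    set s : Fin n := A.max' hAne with hs
    have hsA : s ∈ A := A.max'_mem hAne
    have hsS : s ∈ S := (Finset.mem_filter.mp hsA).1
    have hsD : Desc n parent t₁ s := (Finset.mem_filter.mp hsA).2
    have ht₁0 : (t₁ : ℕ) ≠ 0 := by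
      intro h
      have : (⟨0, hn⟩ : Fin n) = t₁ := Fin.ext h.symm
      exact hd0 (this ▸ desc_refl n parent t₁)
    have hts : (t' : ℕ) < (t₁ : ℕ) := by
      rcases hpar t₁ with h | h
      · rwa [hp] at h
      · exact absurd h ht₁0
    have hst' : s ≠ t' := by
      intro h
      obtain ⟨k, hk⟩ := hsD
      have := hge k s hk
      rw [h] at this
      omega
    have hnochild : ∀ i ∈ S, i ≠ s → parent i ≠ s := by
      intro i hiS his hpis
      have hiD : Desc n parent t₁ i := desc_step hsD hpis
      have hiA : i ∈ A := Finset.mem_filter.mpr ⟨hiS, hiD⟩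
      have hle : i ≤ s := A.le_max' i hiA
      have hi0 : (i : ℕ) ≠ 0 := by
        intro h
        have : (⟨0, hn⟩ : Fin n) = i := Fin.ext h.symm
        exact hd0 (this ▸ hiD)
      rcases hpar i with h | h
      · rw [hpis] at h
        have : (i : ℕ) ≤ (s : ℕ) := hle
        omega
      · exact hi0 h
    refine ⟨s, hsS, hsD, hst', ?_⟩
    by_cases hms : m = s
    · refine ⟨t', ht', Ne.symm hst', ?_⟩
      intro i hiS his
      have him : i ≠ m := fun h => his (h.trans hms)
      exact Or.inr ⟨(htop i hiS).resolve_left him, hnochild i hiS his⟩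
    · refine ⟨m, hm, hms, ?_⟩
      intro i hiS his
      rcases htop i hiS with h | h
      · exact Or.inl h
      · exact Or.inr ⟨h, hnochild i hiS his⟩

/-- One half of the main theorem: a clause in the bag of a child `t₁` and of its
parent `t'` occurs with a variable private to the subtree of `t₁`. -/
lemma main_half [DecidableEq C] [DecidableEq V]
    (n : ℕ) (hn : 0 < n) (parent : Fin n → Fin n)
    (hpar : ∀ i : Fin n, (parent i : ℕ) < (i : ℕ) ∨ (i : ℕ) = 0)
    (occ : C → V → Prop) (Bag : Fin n → Finset (C ⊕ V))
    (htd : IsTD n parent occ Bag)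
    (hmin : ∀ (i : Fin n) (x : C ⊕ V), x ∈ Bag i →
      ¬ IsTD n parent occ (Function.update Bag i ((Bag i).erase x)))
    (t' t₁ : Fin n) (hpt₁ : parent t₁ = t') (hne₁ : t₁ ≠ t')
    (c : C) (hc₁ : Sum.inl c ∈ Bag t₁) (hct' : Sum.inl c ∈ Bag t') :
    ∃ x : V, occ c x ∧ (∃ i, Desc n parent t₁ i ∧ Sum.inr x ∈ Bag i) ∧
      Sum.inr x ∉ Bag t' := by
  classical
  obtain ⟨hCl, hVa, hI, hConn⟩ := htd
  rcases hConn (Sum.inl c) with hnone | ⟨m, hmB, htopB⟩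
  · exact absurd hc₁ (hnone t₁)
  set S : Finset (Fin n) := Finset.univ.filter (fun i => Sum.inl c ∈ Bag i) with hSdef
  have hmemS : ∀ i, i ∈ S ↔ Sum.inl c ∈ Bag i := by
    intro i; simp [hSdef]
  obtain ⟨s, hsS, hsD, hst', m', hm'S, hm's, hprop⟩ :=
    key_lemma n hn parent hpar S m ((hmemS m).mpr hmB)
      (fun i hiS => (htopB i ((hmemS i).mp hiS)).imp id (hmemS _).mpr)
      t' t₁ ((hmemS _).mpr hct') ((hmemS _).mpr hc₁) hpt₁ hne₁
  set Bag' : Fin n → Finset (C ⊕ V) :=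
    Function.update Bag s ((Bag s).erase (Sum.inl c)) with hB'
  have hmem' : ∀ (x : C ⊕ V) (i : Fin n),
      x ∈ Bag' i ↔ (x ∈ Bag i ∧ (i = s → x ≠ Sum.inl c)) := by
    intro x i
    by_cases h : i = s
    · subst h
      rw [hB']
      rw [Function.update_self, Finset.mem_erase]
      constructor
      · rintro ⟨h1, h2⟩; exact ⟨h2, fun _ => h1⟩
      · rintro ⟨h1, h2⟩; exact ⟨h2 rfl, h1⟩
    · rw [hB', Function.update_of_ne h]
      simp [h]
  have h1 : ∀ c0 : C, ∃ i, Sum.inl c0 ∈ Bag' i := by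
    intro c0
    by_cases hc0 : c0 = c
    · subst hc0
      exact ⟨t', (hmem' _ _).mpr ⟨hct', fun h => absurd h (Ne.symm hst')⟩⟩
    · obtain ⟨i, hi⟩ := hCl c0
      exact ⟨i, (hmem' _ _).mpr ⟨hi, fun _ h => hc0 (Sum.inl.inj h)⟩⟩
  have h2 : ∀ v : V, ∃ i, Sum.inr v ∈ Bag' i := by
    intro v
    obtain ⟨i, hi⟩ := hVa v
    exact ⟨i, (hmem' _ _).mpr ⟨hi, fun _ h => nomatch h⟩⟩
  have h4 : ∀ x : C ⊕ V, (∀ i, x ∉ Bag' i) ∨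
      ∃ mm, x ∈ Bag' mm ∧ ∀ i, x ∈ Bag' i → i = mm ∨ x ∈ Bag' (parent i) := by
    intro x
    by_cases hx : x = Sum.inl c
    · subst hx
      right
      refine ⟨m', (hmem' _ _).mpr ⟨(hmemS m').mp hm'S, fun h => absurd h hm's⟩, ?_⟩
      intro i hi
      rw [hmem'] at hi
      have his : i ≠ s := fun h => (hi.2 h) rfl
      have hiS : i ∈ S := (hmemS i).mpr hi.1
      rcases hprop i hiS his with h | ⟨hpS, hps⟩
      · exact Or.inl h
      · exact Or.inr ((hmem' _ _).mpr ⟨(hmemS _).mp hpS, fun h => absurd h hps⟩)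
    · rcases hConn x with hnone | ⟨mm, hmm, htm⟩
      · left
        intro i hi
        exact hnone i ((hmem' x i).mp hi).1
      · right
        refine ⟨mm, (hmem' _ _).mpr ⟨hmm, fun _ => hx⟩, ?_⟩
        intro i hi
        rcases htm i ((hmem' x i).mp hi).1 with h | h
        · exact Or.inl h
        · exact Or.inr ((hmem' _ _).mpr ⟨h, fun _ => hx⟩)
  have hne3 : ¬ ∀ (c0 : C) (v : V), occ c0 v →
      ∃ i, Sum.inl c0 ∈ Bag' i ∧ Sum.inr v ∈ Bag' i :=
    fun h3 => hmin s (Sum.inl c) ((hmemS s).mp hsS) ⟨h1, h2, h3, h4⟩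
  push_neg at hne3
  obtain ⟨c0, v, hocc, hno⟩ := hne3
  have hc0 : c0 = c := by
    by_contra hc0
    obtain ⟨i, hi1, hi2⟩ := hI c0 v hocc
    exact hno i ((hmem' _ _).mpr ⟨hi1, fun _ h => hc0 (Sum.inl.inj h)⟩)
      ((hmem' _ _).mpr ⟨hi2, fun _ h => nomatch h⟩)
  subst hc0
  obtain ⟨i0, hi01, hi02⟩ := hI c0 v hocc
  have hi0s : i0 = s := by
    by_contra h
    exact hno i0 ((hmem' _ _).mpr ⟨hi01, fun hh => absurd hh h⟩)
      ((hmem' _ _).mpr ⟨hi02, fun _ h => nomatch h⟩)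
  refine ⟨v, hocc, ⟨s, hsD, hi0s ▸ hi02⟩, ?_⟩
  intro hvt'
  exact hno t' ((hmem' _ _).mpr ⟨hct', fun h => absurd h (Ne.symm hst')⟩)
    ((hmem' _ _).mpr ⟨hvt', fun _ h => nomatch h⟩)

/-- In a minimal tree decomposition of the incidence graph of a CNF (no element
can be removed from any bag), if a clause `c` appears in the bags of two
distinct children `t₁, t₂` of a node `t'`, then `c` contains an occurrence of
some variable in `Var(T₁) \ Var(t')` and an occurrence of some variable in
`Var(T₂) \ Var(t')`, where `T₁, T₂` are the subtrees rooted at `t₁, t₂`. -/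
theorem shared_clause_has_private_variables [DecidableEq C] [DecidableEq V]
    (n : ℕ) (hn : 0 < n) (parent : Fin n → Fin n)
    (hpar : ∀ i : Fin n, (parent i : ℕ) < (i : ℕ) ∨ (i : ℕ) = 0)
    (occ : C → V → Prop) (Bag : Fin n → Finset (C ⊕ V))
    (htd : IsTD n parent occ Bag)
    (hmin : ∀ (i : Fin n) (x : C ⊕ V), x ∈ Bag i →
      ¬ IsTD n parent occ (Function.update Bag i ((Bag i).erase x)))
    (t' t₁ t₂ : Fin n)
    (hpt₁ : parent t₁ = t') (hne₁ : t₁ ≠ t')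
    (hpt₂ : parent t₂ = t') (hne₂ : t₂ ≠ t') (h12 : t₁ ≠ t₂)
    (c : C) (hc₁ : Sum.inl c ∈ Bag t₁) (hc₂ : Sum.inl c ∈ Bag t₂) :
    (∃ x : V, occ c x ∧ (∃ i, Desc n parent t₁ i ∧ Sum.inr x ∈ Bag i) ∧
      Sum.inr x ∉ Bag t') ∧
    (∃ x : V, occ c x ∧ (∃ i, Desc n parent t₂ i ∧ Sum.inr x ∈ Bag i) ∧
      Sum.inr x ∉ Bag t') := by
  have hct' : Sum.inl c ∈ Bag t' := by
    rcases htd.2.2.2 (Sum.inl c) with hnone | ⟨m, hmB, htm⟩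
    · exact absurd hc₁ (hnone t₁)
    rcases htm t₁ hc₁ with h1 | h1
    · rcases htm t₂ hc₂ with h2 | h2
      · exact absurd (h1.trans h2.symm) h12
      · rwa [hpt₂] at h2
    · rwa [hpt₁] at h1
  exact ⟨main_half n hn parent hpar occ Bag htd hmin t' t₁ hpt₁ hne₁ c hc₁ hct',
         main_half n hn parent hpar occ Bag htd hmin t' t₂ hpt₂ hne₂ c hc₂ hct'⟩
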